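/- Any measure M on objects (ρ,H) that is monotone under correlated-catalytic free transitions satisfies M(ρ₁₂, H₁+H₂) ≥ M(ρ₁⊗ρ₂, H₁+H₂) for every bipartite state ρ₁₂ with marginals ρ₁, ρ₂: taking the catalyst to be (ρ₂, H₂) and applying the swap between the second subsystem and the catalyst yields a correlated-catalytic transition (ρ₁₂, H₁+H₂) → (ρ₁⊗ρ₂, H₁+H₂) whose final catalyst marginal is ρ₂. -/

import Mathlib

open Matrix
open scoped Kronecker ComplexOrder

noncomputable section

/-- Matrix logarithm via spectral decomposition (0 for non-Hermitian input). -/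
def mlog {d : Type*} [Fintype d] [DecidableEq d] (A : Matrix d d ℂ) : Matrix d d ℂ :=
  if h : A.IsHermitian then
    (h.eigenvectorUnitary : Matrix d d ℂ) *
      Matrix.diagonal (fun i => (Real.log (h.eigenvalues i) : ℂ)) *
      (star (h.eigenvectorUnitary : Matrix d d ℂ))
  else 0

/-- Quantum relative entropy S(ρ‖σ) = Tr(ρ log ρ − ρ log σ). -/
def relEnt {d : Type*} [Fintype d] [DecidableEq d] (ρ σ : Matrix d d ℂ) : ℝ :=
  (Matrix.trace (ρ * mlog ρ - ρ * mlog σ)).re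

/-- Von Neumann entropy S(ρ) = −Tr(ρ log ρ). -/
def vnEnt {d : Type*} [Fintype d] [DecidableEq d] (ρ : Matrix d d ℂ) : ℝ :=
  -(Matrix.trace (ρ * mlog ρ)).re

/-- ρ is a density operator. -/
def IsDensity {d : Type*} [Fintype d] (ρ : Matrix d d ℂ) : Prop :=
  ρ.PosSemidef ∧ ρ.trace = 1

/-- Full-rank density operator. -/
def IsFaithfulState {d : Type*} [Fintype d] (σ : Matrix d d ℂ) : Prop :=
  σ.PosDef ∧ σ.trace = 1

/-- Apply a linear map blockwise (i.e. (id_k ⊗ T)). -/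
def blockApply {d e : Type*} [Fintype d] [DecidableEq d] [Fintype e] [DecidableEq e]
    (T : Matrix d d ℂ →ₗ[ℂ] Matrix e e ℂ) {k : Type*}
    (M : Matrix (k × d) (k × d) ℂ) : Matrix (k × e) (k × e) ℂ :=
  Matrix.of fun p q => T (Matrix.of fun i j => M (p.1, i) (q.1, j)) p.2 q.2

/-- Quantum channel: trace preserving and completely positive. -/
def IsQChannel {d e : Type*} [Fintype d] [DecidableEq d] [Fintype e] [DecidableEq e]
    (T : Matrix d d ℂ →ₗ[ℂ] Matrix e e ℂ) : Prop :=
  (∀ M : Matrix d d ℂ, (T M).trace = M.trace) ∧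
  (∀ (k : Type) [Fintype k] [DecidableEq k] (M : Matrix (k × d) (k × d) ℂ),
      M.PosSemidef → (blockApply T M).PosSemidef)

/-- Gibbs state ω_{β,H} = e^{−βH}/Tr e^{−βH}. -/
def gibbs {d : Type*} [Fintype d] [DecidableEq d] (β : ℝ) (H : Matrix d d ℂ) :
    Matrix d d ℂ :=
  (Matrix.trace (NormedSpace.exp ((-β : ℂ) • H)))⁻¹ • NormedSpace.exp ((-β : ℂ) • H)

/-- Non-equilibrium free energy difference ΔF_β(ρ,H) = (1/β) S(ρ‖ω_{β,H}). -/
def dF {d : Type*} [Fintype d] [DecidableEq d] (β : ℝ) (ρ H : Matrix d d ℂ) : ℝ :=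
  (1 / β) * relEnt ρ (gibbs β H)

/-- Partial trace over the second factor. -/
def ptraceRight {d₁ d₂ : Type*} [Fintype d₂]
    (M : Matrix (d₁ × d₂) (d₁ × d₂) ℂ) : Matrix d₁ d₁ ℂ :=
  Matrix.of fun i j => ∑ k, M (i, k) (j, k)

/-- Partial trace over the first factor. -/
def ptraceLeft {d₁ d₂ : Type*} [Fintype d₁]
    (M : Matrix (d₁ × d₂) (d₁ × d₂) ℂ) : Matrix d₂ d₂ ℂ :=
  Matrix.of fun i j => ∑ k, M (k, i) (k, j)

/-- n-fold tensor power of a matrix. -/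
def tpow {d : Type*} [Fintype d] (ρ : Matrix d d ℂ) (n : ℕ) :
    Matrix (Fin n → d) (Fin n → d) ℂ :=
  Matrix.of fun a b => ∏ i, ρ (a i) (b i)

/-- Tensor product of a finite family of matrices. -/
def tprodFam {k : ℕ} {c : Type*} [Fintype c] (γ : Fin k → Matrix c c ℂ) :
    Matrix (Fin k → c) (Fin k → c) ℂ :=
  Matrix.of fun a b => ∏ i, γ i (a i) (b i)

/-- Single-site marginal at site i of a state on an n-fold tensor product. -/
def marginal {d : Type*} [Fintype d] [DecidableEq d] {n : ℕ}
    (M : Matrix (Fin n → d) (Fin n → d) ℂ) (i : Fin n) : Matrix d d ℂ :=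
  Matrix.of fun a b => ∑ g : {j : Fin n // j ≠ i} → d,
    M (fun j => if h : j = i then a else g ⟨j, h⟩)
      (fun j => if h : j = i then b else g ⟨j, h⟩)

section kron
variable (d₁ d₂ : Type) [Fintype d₁] [DecidableEq d₁] [Fintype d₂] [DecidableEq d₂]

def kronLeftHom : Matrix d₁ d₁ ℂ →ₐ[ℂ] Matrix (d₁ × d₂) (d₁ × d₂) ℂ where
  toFun A := A ⊗ₖ (1 : Matrix d₂ d₂ ℂ)
  map_one' := Matrix.one_kronecker_one
  map_mul' A B := by rw [← Matrix.mul_kronecker_mul, Matrix.one_mul]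
  map_zero' := Matrix.zero_kronecker _
  map_add' A B := Matrix.add_kronecker _ _ _
  commutes' c := by
    simp only [Algebra.algebraMap_eq_smul_one]
    rw [Matrix.smul_kronecker, Matrix.one_kronecker_one]

def kronRightHom : Matrix d₂ d₂ ℂ →ₐ[ℂ] Matrix (d₁ × d₂) (d₁ × d₂) ℂ where
  toFun B := (1 : Matrix d₁ d₁ ℂ) ⊗ₖ B
  map_one' := Matrix.one_kronecker_one
  map_mul' A B := by rw [← Matrix.mul_kronecker_mul, Matrix.one_mul]
  map_zero' := Matrix.kronecker_zero _
  map_add' A B := Matrix.kronecker_add _ _ _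
  commutes' c := by
    simp only [Algebra.algebraMap_eq_smul_one]
    rw [Matrix.kronecker_smul, Matrix.one_kronecker_one]

variable {d₁ d₂}

lemma exp_kron_sum (A : Matrix d₁ d₁ ℂ) (B : Matrix d₂ d₂ ℂ) :
    NormedSpace.exp (A ⊗ₖ (1 : Matrix d₂ d₂ ℂ) + (1 : Matrix d₁ d₁ ℂ) ⊗ₖ B)
      = NormedSpace.exp A ⊗ₖ NormedSpace.exp B := by
  have hcomm : Commute (A ⊗ₖ (1 : Matrix d₂ d₂ ℂ)) ((1 : Matrix d₁ d₁ ℂ) ⊗ₖ B) := by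
    show _ = _
    rw [← Matrix.mul_kronecker_mul, ← Matrix.mul_kronecker_mul, Matrix.one_mul,
      Matrix.mul_one, Matrix.one_mul, Matrix.mul_one]
  refine (Matrix.exp_add_of_commute _ _ hcomm).trans ?_
  have h1 : NormedSpace.exp (A ⊗ₖ (1 : Matrix d₂ d₂ ℂ))
      = NormedSpace.exp A ⊗ₖ (1 : Matrix d₂ d₂ ℂ) := by
    letI : NormedRing (Matrix d₁ d₁ ℂ) := Matrix.linftyOpNormedRing
    letI : NormedAlgebra ℂ (Matrix d₁ d₁ ℂ) := Matrix.linftyOpNormedAlgebra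
    letI : NormedAlgebra ℚ (Matrix d₁ d₁ ℂ) := NormedAlgebra.restrictScalars ℚ ℂ _
    letI : NormedRing (Matrix (d₁ × d₂) (d₁ × d₂) ℂ) := Matrix.linftyOpNormedRing
    letI : NormedAlgebra ℂ (Matrix (d₁ × d₂) (d₁ × d₂) ℂ) := Matrix.linftyOpNormedAlgebra
    letI : NormedAlgebra ℚ (Matrix (d₁ × d₂) (d₁ × d₂) ℂ) := NormedAlgebra.restrictScalars ℚ ℂ _
    exact (NormedSpace.map_exp (kronLeftHom d₁ d₂)
      ((kronLeftHom d₁ d₂).toLinearMap.continuous_of_finiteDimensional) A).symm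
  have h2 : NormedSpace.exp ((1 : Matrix d₁ d₁ ℂ) ⊗ₖ B)
      = (1 : Matrix d₁ d₁ ℂ) ⊗ₖ NormedSpace.exp B := by
    letI : NormedRing (Matrix d₂ d₂ ℂ) := Matrix.linftyOpNormedRing
    letI : NormedAlgebra ℂ (Matrix d₂ d₂ ℂ) := Matrix.linftyOpNormedAlgebra
    letI : NormedAlgebra ℚ (Matrix d₂ d₂ ℂ) := NormedAlgebra.restrictScalars ℚ ℂ _
    letI : NormedRing (Matrix (d₁ × d₂) (d₁ × d₂) ℂ) := Matrix.linftyOpNormedRing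
    letI : NormedAlgebra ℂ (Matrix (d₁ × d₂) (d₁ × d₂) ℂ) := Matrix.linftyOpNormedAlgebra
    letI : NormedAlgebra ℚ (Matrix (d₁ × d₂) (d₁ × d₂) ℂ) := NormedAlgebra.restrictScalars ℚ ℂ _
    exact (NormedSpace.map_exp (kronRightHom d₁ d₂)
      ((kronRightHom d₁ d₂).toLinearMap.continuous_of_finiteDimensional) B).symm
  rw [h1, h2, ← Matrix.mul_kronecker_mul, Matrix.one_mul, Matrix.mul_one]

lemma gibbs_kron (β : ℝ) (H₁ : Matrix d₁ d₁ ℂ) (H₂ : Matrix d₂ d₂ ℂ) :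
    gibbs β (H₁ ⊗ₖ (1 : Matrix d₂ d₂ ℂ) + (1 : Matrix d₁ d₁ ℂ) ⊗ₖ H₂)
      = gibbs β H₁ ⊗ₖ gibbs β H₂ := by
  unfold gibbs
  have hsmul : (-β : ℂ) • (H₁ ⊗ₖ (1 : Matrix d₂ d₂ ℂ) + (1 : Matrix d₁ d₁ ℂ) ⊗ₖ H₂)
      = ((-β : ℂ) • H₁) ⊗ₖ (1 : Matrix d₂ d₂ ℂ) + (1 : Matrix d₁ d₁ ℂ) ⊗ₖ ((-β : ℂ) • H₂) := by
    rw [smul_add, Matrix.smul_kronecker, Matrix.kronecker_smul]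
  rw [hsmul, exp_kron_sum, Matrix.trace_kronecker, Matrix.smul_kronecker,
    Matrix.kronecker_smul, mul_inv, smul_smul]

end kron

section ptr
variable {d₁ d₂ : Type} [Fintype d₁] [DecidableEq d₁] [Fintype d₂] [DecidableEq d₂]

lemma trace_ptraceLeft (M : Matrix (d₁ × d₂) (d₁ × d₂) ℂ) :
    (ptraceLeft M).trace = M.trace := by
  simp only [Matrix.trace, Matrix.diag, ptraceLeft, Matrix.of_apply, Fintype.sum_prod_type]
  exact Finset.sum_comm

lemma ptraceLeft_posSemidef {M : Matrix (d₁ × d₂) (d₁ × d₂) ℂ} (hM : M.PosSemidef) :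
    (ptraceLeft M).PosSemidef := by
  obtain ⟨B, rfl⟩ : ∃ B : Matrix (d₁ × d₂) (d₁ × d₂) ℂ, M = Bᴴ * B := by
    open scoped MatrixOrder in exact CStarAlgebra.nonneg_iff_eq_star_mul_self.mp hM.nonneg
  have h : ptraceLeft (Bᴴ * B)
      = (Matrix.of fun (pk : (d₁ × d₂) × d₁) (i : d₂) => B pk.1 (pk.2, i))ᴴ *
        (Matrix.of fun (pk : (d₁ × d₂) × d₁) (i : d₂) => B pk.1 (pk.2, i)) := by
    ext i j
    simp only [ptraceLeft, Matrix.of_apply, Matrix.mul_apply, Matrix.conjTranspose_apply,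
      Fintype.sum_prod_type]
    rw [Finset.sum_comm]
    exact Finset.sum_congr rfl fun a _ => Finset.sum_comm
  rw [h]
  exact Matrix.posSemidef_conjTranspose_mul_self _

end ptr

lemma kron_isHermitian {d₁ d₂ : Type*} [Fintype d₁] [DecidableEq d₁] [Fintype d₂]
    [DecidableEq d₂] {A : Matrix d₁ d₁ ℂ} {B : Matrix d₂ d₂ ℂ}
    (hA : A.IsHermitian) (hB : B.IsHermitian) : (A ⊗ₖ B).IsHermitian := by
  ext ⟨i, j⟩ ⟨i', j'⟩
  show star (A i' i * B j' j) = A i i' * B j j'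
  rw [star_mul', ← Matrix.conjTranspose_apply, ← Matrix.conjTranspose_apply, hA, hB]

/-- Trace norm of a matrix: sum of singular values. -/
def traceNorm {d : Type*} [Fintype d] [DecidableEq d] (A : Matrix d d ℂ) : ℝ :=
  ∑ i, Real.sqrt ((Matrix.posSemidef_conjTranspose_mul_self A).1.eigenvalues i)


theorem correlated_catalytic_implies_superadditive
    (β : ℝ) (hβ : 0 < β)
    (M : ∀ (d : Type) [Fintype d] [DecidableEq d], Matrix d d ℂ → Matrix d d ℂ → ℝ)
    (hmono : ∀ (dS dS' dA : Type) [Fintype dS] [DecidableEq dS]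
        [Fintype dS'] [DecidableEq dS'] [Fintype dA] [DecidableEq dA]
        (G : Matrix (dS × dA) (dS × dA) ℂ →ₗ[ℂ] Matrix (dS' × dA) (dS' × dA) ℂ),
        IsQChannel G →
        ∀ (H : Matrix dS dS ℂ) (K : Matrix dS' dS' ℂ) (R : Matrix dA dA ℂ),
        H.IsHermitian → K.IsHermitian → R.IsHermitian →
        G (gibbs β H ⊗ₖ gibbs β R) = gibbs β K ⊗ₖ gibbs β R →
        ∀ (ρ : Matrix dS dS ℂ) (σ : Matrix dS' dS' ℂ) (γ : Matrix dA dA ℂ),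
        IsDensity ρ → IsDensity γ →
        ptraceRight (G (ρ ⊗ₖ γ)) = σ → ptraceLeft (G (ρ ⊗ₖ γ)) = γ →
        M dS' σ K ≤ M dS ρ H)
    (d₁ d₂ : Type) [Fintype d₁] [DecidableEq d₁] [Fintype d₂] [DecidableEq d₂]
    (ρ₁₂ : Matrix (d₁ × d₂) (d₁ × d₂) ℂ) (hρ₁₂ : IsDensity ρ₁₂)
    (H₁ : Matrix d₁ d₁ ℂ) (H₂ : Matrix d₂ d₂ ℂ)
    (hH₁ : H₁.IsHermitian) (hH₂ : H₂.IsHermitian) :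
    M (d₁ × d₂) (ptraceRight ρ₁₂ ⊗ₖ ptraceLeft ρ₁₂)
        (H₁ ⊗ₖ (1 : Matrix d₂ d₂ ℂ) + (1 : Matrix d₁ d₁ ℂ) ⊗ₖ H₂) ≤
      M (d₁ × d₂) ρ₁₂
        (H₁ ⊗ₖ (1 : Matrix d₂ d₂ ℂ) + (1 : Matrix d₁ d₁ ℂ) ⊗ₖ H₂) := by
  set Htot : Matrix (d₁ × d₂) (d₁ × d₂) ℂ :=
    H₁ ⊗ₖ (1 : Matrix d₂ d₂ ℂ) + (1 : Matrix d₁ d₁ ℂ) ⊗ₖ H₂ with hHtot_def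
  set γ : Matrix d₂ d₂ ℂ := ptraceLeft ρ₁₂ with hγ_def
  -- the swap-reindexing equivalence
  let e : ((d₁ × d₂) × d₂) ≃ ((d₁ × d₂) × d₂) :=
    { toFun := fun p => ((p.1.1, p.2), p.1.2)
      invFun := fun p => ((p.1.1, p.2), p.1.2)
      left_inv := fun p => rfl
      right_inv := fun p => rfl }
  let G : Matrix ((d₁ × d₂) × d₂) ((d₁ × d₂) × d₂) ℂ →ₗ[ℂ]
      Matrix ((d₁ × d₂) × d₂) ((d₁ × d₂) × d₂) ℂ :=
    { toFun := fun M => M.submatrix e e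
      map_add' := fun A B => rfl
      map_smul' := fun c A => rfl }
  have hG : IsQChannel G := by
    constructor
    · intro N
      show (N.submatrix e e).trace = N.trace
      simp only [Matrix.trace, Matrix.diag, Matrix.submatrix_apply]
      exact Fintype.sum_equiv e _ _ fun p => rfl
    · intro k _ _ N hN
      have hblock : blockApply G N
          = N.submatrix (fun p => (p.1, e p.2)) (fun p => (p.1, e p.2)) := by
        ext p q
        rfl
      rw [hblock]
      exact hN.submatrix _
  have hHherm : Htot.IsHermitian :=
    (kron_isHermitian hH₁ Matrix.isHermitian_one).add
      (kron_isHermitian Matrix.isHermitian_one hH₂)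
  have hGibbs : G (gibbs β Htot ⊗ₖ gibbs β H₂) = gibbs β Htot ⊗ₖ gibbs β H₂ := by
    rw [hHtot_def, gibbs_kron]
    ext ⟨⟨i, j⟩, k⟩ ⟨⟨i', j'⟩, k'⟩
    show gibbs β H₁ i i' * gibbs β H₂ k k' * gibbs β H₂ j j'
      = gibbs β H₁ i i' * gibbs β H₂ j j' * gibbs β H₂ k k'
    ring
  have hγdens : IsDensity γ := ⟨ptraceLeft_posSemidef hρ₁₂.1,
    (trace_ptraceLeft ρ₁₂).trans hρ₁₂.2⟩
  have hright : ptraceRight (G (ρ₁₂ ⊗ₖ γ)) = ptraceRight ρ₁₂ ⊗ₖ γ := by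
    ext ⟨i, j⟩ ⟨i', j'⟩
    show (∑ k, ρ₁₂ (i, k) (i', k) * γ j j') = (ptraceRight ρ₁₂ ⊗ₖ γ) (i, j) (i', j')
    rw [← Finset.sum_mul]
    rfl
  have hleft : ptraceLeft (G (ρ₁₂ ⊗ₖ γ)) = γ := by
    have htr : γ.trace = 1 := (trace_ptraceLeft ρ₁₂).trans hρ₁₂.2
    ext k k'
    show (∑ p : d₁ × d₂, ρ₁₂ (p.1, k) (p.1, k') * γ p.2 p.2) = γ k k'
    rw [Fintype.sum_prod_type]
    calc ∑ i, ∑ j, ρ₁₂ (i, k) (i, k') * γ j j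
        = ∑ i, ρ₁₂ (i, k) (i, k') * γ.trace := by
          refine Finset.sum_congr rfl fun i _ => ?_
          rw [Matrix.trace]
          exact (Finset.mul_sum _ _ _).symm
      _ = γ k k' := by
          rw [htr]
          simp [hγ_def, ptraceLeft]
  exact hmono (d₁ × d₂) (d₁ × d₂) d₂ G hG Htot Htot H₂ hHherm hHherm hH₂ hGibbs
    ρ₁₂ (ptraceRight ρ₁₂ ⊗ₖ γ) γ hρ₁₂ hγdens hright hleft

end
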